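/- For every natural number k ≥ 1 and a formal parameter λ, the identity ∑_{s=0}^∞ λ^s · s! · C(k+s-1, k-1)^2 / ∏_{ℓ=1}^{k+s}(1+λℓ) = 1 / ∏_{ℓ=1}^{k-1}(1-λℓ) holds as an identity of formal power series in λ. -/

import Mathlib

open scoped BigOperators

open PowerSeries Finset

noncomputable section FRFaux

abbrev Rc := PowerSeries ℂ

def Pp (n : ℕ) : Rc :=
  ∏ ℓ ∈ Finset.range n, (1 + PowerSeries.C (R := ℂ) ((ℓ + 1 : ℕ) : ℂ) * PowerSeries.X)

def Qq (k : ℕ) : Rc :=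
  ∏ ℓ ∈ Finset.range (k - 1), (1 - PowerSeries.C (R := ℂ) ((ℓ + 1 : ℕ) : ℂ) * PowerSeries.X)

def trm (k s : ℕ) : Rc :=
  PowerSeries.X ^ s * PowerSeries.C (R := ℂ) (s.factorial : ℂ)
    * PowerSeries.C (R := ℂ) ((((k + s - 1).choose (k - 1)) ^ 2 : ℕ) : ℂ)
    * (Pp (k + s))⁻¹

lemma constCoeff_Pp (n : ℕ) : constantCoeff (R := ℂ) (Pp n) = 1 := by
  unfold Pp; rw [map_prod]; simp

lemma Pp_mul_inv (n : ℕ) : Pp n * (Pp n)⁻¹ = 1 :=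
  PowerSeries.mul_inv_cancel _ (by rw [constCoeff_Pp]; exact one_ne_zero)

lemma constCoeff_Qq (k : ℕ) : constantCoeff (R := ℂ) (Qq k) = 1 := by
  unfold Qq; rw [map_prod]; simp

lemma Qq_mul_inv (k : ℕ) : Qq k * (Qq k)⁻¹ = 1 :=
  PowerSeries.mul_inv_cancel _ (by rw [constCoeff_Qq]; exact one_ne_zero)

lemma Pp_succ (n : ℕ) :
    Pp (n + 1) = Pp n * (1 + PowerSeries.C (R := ℂ) ((n + 1 : ℕ) : ℂ) * PowerSeries.X) := by
  unfold Pp; rw [Finset.prod_range_succ]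

lemma inv_one' : (1 : Rc)⁻¹ = 1 := by
  symm
  rw [PowerSeries.eq_inv_iff_mul_eq_one (by simp)]
  simp

lemma cancel_right {A B P : Rc} (hP : P * P⁻¹ = 1) (h : A * P = B * P) : A = B := by
  have h2 : A * (P * P⁻¹) = B * (P * P⁻¹) := by
    rw [← mul_assoc, ← mul_assoc, h]
  simpa [hP] using h2

lemma coeff_X_pow_mul_eq_zero {s j : ℕ} (h : j < s) (f : Rc) :
    PowerSeries.coeff (R := ℂ) j (PowerSeries.X ^ s * f) = 0 := by
  rw [mul_comm, PowerSeries.coeff_mul_X_pow']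
  rw [if_neg (by omega)]

lemma coeff_trm_zero {k s j : ℕ} (h : j < s) : PowerSeries.coeff (R := ℂ) j (trm k s) = 0 := by
  have he : trm k s = PowerSeries.X ^ s *
      (PowerSeries.C (R := ℂ) (s.factorial : ℂ)
        * PowerSeries.C (R := ℂ) ((((k + s - 1).choose (k - 1)) ^ 2 : ℕ) : ℂ)
        * (Pp (k + s))⁻¹) := by
    unfold trm; ring
  rw [he]
  exact coeff_X_pow_mul_eq_zero h _

lemma coeff_mul_congr {f g : Rc} (u : Rc) (N : ℕ)
    (h : ∀ j ≤ N, PowerSeries.coeff (R := ℂ) j f = PowerSeries.coeff (R := ℂ) j g) :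
    ∀ j ≤ N, PowerSeries.coeff (R := ℂ) j (u * f) = PowerSeries.coeff (R := ℂ) j (u * g) := by
  intro j hj
  rw [PowerSeries.coeff_mul, PowerSeries.coeff_mul]
  refine Finset.sum_congr rfl ?_
  intro p hp
  rw [Finset.HasAntidiagonal.mem_antidiagonal] at hp
  rw [h p.2 (by omega)]

lemma coeff_sum_stable (k N j : ℕ) (hj : j ≤ N) :
    PowerSeries.coeff (R := ℂ) j (∑ s ∈ Finset.range (N + 1), trm k s)
      = PowerSeries.coeff (R := ℂ) j (∑ s ∈ Finset.range (j + 1), trm k s) := by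
  rw [← Finset.sum_range_add_sum_Ico (trm k) (Nat.succ_le_succ hj), map_add]
  have hz : PowerSeries.coeff (R := ℂ) j (∑ s ∈ Finset.Ico (j + 1) (N + 1), trm k s) = 0 := by
    rw [map_sum]
    refine Finset.sum_eq_zero ?_
    intro s hs
    rw [Finset.mem_Ico] at hs
    exact coeff_trm_zero (by omega)
  rw [hz, add_zero]

/-- the key identity, complex-cast form -/
lemma key_c (k t : ℕ) (hk : 1 ≤ k) :
    ((((t + 2 * k + 1) * (t.factorial * ((k + t).choose k) ^ 2)) : ℕ) : ℂ)
      = ((t + 1).factorial : ℂ) * ((((k + t + 1).choose k) ^ 2 : ℕ) : ℂ)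
        - ((t + 1).factorial : ℂ) * ((((k + t).choose (k - 1)) ^ 2 : ℕ) : ℂ) := by
  obtain ⟨m, rfl⟩ : ∃ m, k = m + 1 := ⟨k - 1, by omega⟩
  have e1 : m + 1 - 1 = m := by omega
  have hpas : (m + 1 + t + 1).choose (m + 1)
      = (m + 1 + t).choose m + (m + 1 + t).choose (m + 1) :=
    Nat.choose_succ_succ _ _
  have h := Nat.choose_succ_right_eq (m + 1 + t) m
  have e2 : m + 1 + t - m = t + 1 := by omega
  rw [e2] at h
  rw [e1, hpas, Nat.factorial_succ]
  have hc := congrArg (Nat.cast (R := ℂ)) h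
  push_cast at hc ⊢
  linear_combination (2 * (t.factorial : ℂ) * (((m + 1 + t).choose (m + 1) : ℕ) : ℂ)) * hc

def Wf (k : ℕ) : ℕ → Rc
  | 0 => 0
  | (s + 1) => PowerSeries.C (R := ℂ) ((((s + 2 * k + 1) * (s.factorial * ((k + s).choose k) ^ 2)) : ℕ) : ℂ)
      * (PowerSeries.X ^ (s + 1) * (Pp (k + 1 + s))⁻¹)

lemma main (k : ℕ) (hk : 1 ≤ k) :
    ∀ N : ℕ,
      PowerSeries.coeff (R := ℂ) N (∑ s ∈ Finset.range (N + 1), trm k s)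
        = PowerSeries.coeff (R := ℂ) N (Qq k)⁻¹ := by
  induction k, hk using Nat.le_induction with
  | base =>
    intro N
    have hQ : Qq 1 = 1 := by unfold Qq; simp
    set U : ℕ → Rc := fun s =>
      PowerSeries.X ^ s * PowerSeries.C (R := ℂ) (s.factorial : ℂ) * (Pp s)⁻¹ with hU
    have htele : ∀ s, trm 1 s = U s - U (s + 1) := by
      intro s
      have h1s : (1 : ℕ) + s = s + 1 := by omega
      apply cancel_right (Pp_mul_inv (s + 1))
      have hsplit : Pp (s + 1)
          = Pp s * (1 + PowerSeries.C (R := ℂ) ((s + 1 : ℕ) : ℂ) * PowerSeries.X) := Pp_succ s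
      have hA : Pp s * (Pp s)⁻¹ = 1 := Pp_mul_inv s
      have hB : (Pp s * (1 + PowerSeries.C (R := ℂ) ((s + 1 : ℕ) : ℂ) * PowerSeries.X)) *
          (Pp s * (1 + PowerSeries.C (R := ℂ) ((s + 1 : ℕ) : ℂ) * PowerSeries.X))⁻¹ = 1 := by
        rw [← hsplit]; exact Pp_mul_inv (s + 1)
      have hCfact : PowerSeries.C (R := ℂ) ((s + 1).factorial : ℂ)
          = PowerSeries.C (R := ℂ) ((s + 1 : ℕ) : ℂ) * PowerSeries.C (R := ℂ) (s.factorial : ℂ) := by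
        rw [← map_mul]
        congr 1
        rw [Nat.factorial_succ]; push_cast; ring
      have hone : ((((s + 1 - 1).choose (1 - 1)) ^ 2 : ℕ) : ℂ) = 1 := by
        simp
      unfold trm
      simp only [hU, h1s, hone, map_one, hsplit]
      linear_combination
        (PowerSeries.X ^ s * PowerSeries.C (R := ℂ) (s.factorial : ℂ)
          + PowerSeries.X ^ (s + 1) * PowerSeries.C (R := ℂ) ((s + 1).factorial : ℂ)) * hB
        - PowerSeries.X ^ s * PowerSeries.C (R := ℂ) (s.factorial : ℂ)
            * (1 + PowerSeries.C (R := ℂ) ((s + 1 : ℕ) : ℂ) * PowerSeries.X) * hA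
        + PowerSeries.X ^ (s + 1) * hCfact
    have hsum : (∑ s ∈ Finset.range (N + 1), trm 1 s) = U 0 - U (N + 1) := by
      rw [Finset.sum_congr rfl (fun s _ => htele s)]
      exact Finset.sum_range_sub' U (N + 1)
    have hPp0 : Pp 0 = 1 := by unfold Pp; simp
    have hU0 : U 0 = 1 := by
      simp only [hU, pow_zero, Nat.factorial_zero, Nat.cast_one, map_one, hPp0,
        inv_one']
      ring
    rw [hsum, hU0, hQ, inv_one', map_sub]
    have hz : PowerSeries.coeff (R := ℂ) N (U (N + 1)) = 0 := by
      have he : U (N + 1) = PowerSeries.X ^ (N + 1) *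
          (PowerSeries.C (R := ℂ) ((N + 1).factorial : ℂ) * (Pp (N + 1))⁻¹) := by
        simp only [hU]; ring
      rw [he]
      exact coeff_X_pow_mul_eq_zero (by omega) _
    rw [hz, sub_zero]
  | succ k hk IH =>
    intro N
    set g : Rc := 1 - PowerSeries.C (R := ℂ) ((k : ℕ) : ℂ) * PowerSeries.X with hgdef
    have hgc : constantCoeff (R := ℂ) g ≠ 0 := by
      rw [hgdef]; simp
    have hg : g * g⁻¹ = 1 := PowerSeries.mul_inv_cancel _ hgc
    have hterm : ∀ s, g * trm (k + 1) s = trm k s + (Wf k s - Wf k (s + 1)) := by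
      intro s
      cases s with
      | zero =>
        have hW0 : Wf k 0 = 0 := rfl
        have hW1 : Wf k (0 + 1) = PowerSeries.C (R := ℂ) (((2 * k + 1 : ℕ)) : ℂ)
            * (PowerSeries.X ^ 1 * (Pp (k + 1))⁻¹) := by
          show PowerSeries.C (R := ℂ) ((((0 + 2 * k + 1) * (Nat.factorial 0 * ((k + 0).choose k) ^ 2)) : ℕ) : ℂ)
              * (PowerSeries.X ^ (0 + 1) * (Pp (k + 1 + 0))⁻¹) = _
          norm_num
        apply cancel_right (Pp_mul_inv (k + 1))
        have hsplit : Pp (k + 1)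
            = Pp k * (1 + PowerSeries.C (R := ℂ) ((k + 1 : ℕ) : ℂ) * PowerSeries.X) := Pp_succ k
        have hA : Pp k * (Pp k)⁻¹ = 1 := Pp_mul_inv k
        have hB : (Pp k * (1 + PowerSeries.C (R := ℂ) ((k + 1 : ℕ) : ℂ) * PowerSeries.X)) *
            (Pp k * (1 + PowerSeries.C (R := ℂ) ((k + 1 : ℕ) : ℂ) * PowerSeries.X))⁻¹ = 1 := by
          rw [← hsplit]; exact Pp_mul_inv (k + 1)
        have hone1 : ((((k + 1 + 0 - 1).choose (k + 1 - 1)) ^ 2 : ℕ) : ℂ) = 1 := by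
          simp
        have hone2 : ((((k + 0 - 1).choose (k - 1)) ^ 2 : ℕ) : ℂ) = 1 := by
          simp
        have hk2 : PowerSeries.C (R := ℂ) ((2 * k + 1 : ℕ) : ℂ)
            = PowerSeries.C (R := ℂ) ((k + 1 : ℕ) : ℂ) + PowerSeries.C (R := ℂ) ((k : ℕ) : ℂ) := by
          rw [← map_add]; congr 1; push_cast; ring
        have ek1 : k + 1 + 0 = k + 1 := by omega
        have ek0 : k + 0 = k := by omega
        unfold trm
        rw [hW0, hW1, hone1, hone2, map_one, ek1, ek0, hgdef, hsplit]
        simp only [Nat.factorial_zero, Nat.cast_one, map_one]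
        linear_combination
          ((1 - PowerSeries.C (R := ℂ) ((k : ℕ) : ℂ) * PowerSeries.X) * (PowerSeries.X ^ 0 * 1 * 1)
            + PowerSeries.C (R := ℂ) ((2 * k + 1 : ℕ) : ℂ) * PowerSeries.X ^ 1) * hB
          - (PowerSeries.X ^ 0 * 1 * 1)
              * (1 + PowerSeries.C (R := ℂ) ((k + 1 : ℕ) : ℂ) * PowerSeries.X) * hA
          + PowerSeries.X ^ 1 * hk2
      | succ t =>
        apply cancel_right (Pp_mul_inv (k + t + 2))
        have hsplit : Pp (k + t + 2)
            = Pp (k + t + 1) * (1 + PowerSeries.C (R := ℂ) ((k + t + 2 : ℕ) : ℂ) * PowerSeries.X) := by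
          have : k + t + 2 = (k + t + 1) + 1 := by omega
          rw [this, Pp_succ (k + t + 1)]
        have hA : Pp (k + t + 1) * (Pp (k + t + 1))⁻¹ = 1 := Pp_mul_inv _
        have hB : (Pp (k + t + 1) * (1 + PowerSeries.C (R := ℂ) ((k + t + 2 : ℕ) : ℂ) * PowerSeries.X)) *
            (Pp (k + t + 1) * (1 + PowerSeries.C (R := ℂ) ((k + t + 2 : ℕ) : ℂ) * PowerSeries.X))⁻¹ = 1 := by
          rw [← hsplit]; exact Pp_mul_inv (k + t + 2)
        -- index normalizations
        have e1 : k + 1 + (t + 1) - 1 = k + t + 1 := by omega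
        have e2 : k + 1 - 1 = k := by omega
        have e3 : k + 1 + (t + 1) = k + t + 2 := by omega
        have e4 : k + (t + 1) - 1 = k + t := by omega
        have e5 : k + (t + 1) = k + t + 1 := by omega
        have e6 : k + 1 + t = k + t + 1 := by omega
        have hWt1 : Wf k (t + 1)
            = PowerSeries.C (R := ℂ) ((((t + 2 * k + 1) * (t.factorial * ((k + t).choose k) ^ 2)) : ℕ) : ℂ)
              * (PowerSeries.X ^ (t + 1) * (Pp (k + t + 1))⁻¹) := by
          show PowerSeries.C (R := ℂ) ((((t + 2 * k + 1) * (t.factorial * ((k + t).choose k) ^ 2)) : ℕ) : ℂ)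
              * (PowerSeries.X ^ (t + 1) * (Pp (k + 1 + t))⁻¹) = _
          rw [e6]
        have hWt2 : Wf k (t + 1 + 1)
            = PowerSeries.C (R := ℂ) (((((t + 1) + 2 * k + 1) * ((t + 1).factorial * ((k + t + 1).choose k) ^ 2)) : ℕ) : ℂ)
              * (PowerSeries.X ^ (t + 2) * (Pp (k + t + 2))⁻¹) := by
          show PowerSeries.C (R := ℂ) (((((t + 1) + 2 * k + 1) * ((t + 1).factorial * ((k + (t + 1)).choose k) ^ 2)) : ℕ) : ℂ)
              * (PowerSeries.X ^ (t + 1 + 1) * (Pp (k + 1 + (t + 1)))⁻¹) = _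
          rw [e5, e3]
        have hγ : PowerSeries.C (R := ℂ) ((((t + 2 * k + 1) * (t.factorial * ((k + t).choose k) ^ 2)) : ℕ) : ℂ)
            = PowerSeries.C (R := ℂ) ((t + 1).factorial : ℂ)
                * PowerSeries.C (R := ℂ) ((((k + t + 1).choose k) ^ 2 : ℕ) : ℂ)
              - PowerSeries.C (R := ℂ) ((t + 1).factorial : ℂ)
                * PowerSeries.C (R := ℂ) ((((k + t).choose (k - 1)) ^ 2 : ℕ) : ℂ) := by
          rw [← map_mul, ← map_mul, ← map_sub]
          exact congrArg _ (key_c k t hk)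
        have hδ : PowerSeries.C (R := ℂ) (((((t + 1) + 2 * k + 1) * ((t + 1).factorial * ((k + t + 1).choose k) ^ 2)) : ℕ) : ℂ)
            = (PowerSeries.C (R := ℂ) ((k + t + 2 : ℕ) : ℂ) + PowerSeries.C (R := ℂ) ((k : ℕ) : ℂ))
              * (PowerSeries.C (R := ℂ) ((t + 1).factorial : ℂ)
                  * PowerSeries.C (R := ℂ) ((((k + t + 1).choose k) ^ 2 : ℕ) : ℂ)) := by
          rw [← map_add, ← map_mul, ← map_mul]
          congr 1
          push_cast; ring
        unfold trm
        rw [hWt1, hWt2, e1, e2, e3, e4, e5, hγ, hδ, hgdef, hsplit]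
        linear_combination
          ((1 - PowerSeries.C (R := ℂ) ((k : ℕ) : ℂ) * PowerSeries.X) * PowerSeries.X ^ (t + 1)
              * PowerSeries.C (R := ℂ) ((t + 1).factorial : ℂ)
              * PowerSeries.C (R := ℂ) ((((k + t + 1).choose k) ^ 2 : ℕ) : ℂ)
            + (PowerSeries.C (R := ℂ) ((k + t + 2 : ℕ) : ℂ) + PowerSeries.C (R := ℂ) ((k : ℕ) : ℂ))
              * (PowerSeries.C (R := ℂ) ((t + 1).factorial : ℂ)
                  * PowerSeries.C (R := ℂ) ((((k + t + 1).choose k) ^ 2 : ℕ) : ℂ))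
              * PowerSeries.X ^ (t + 2)) * hB
          - (PowerSeries.X ^ (t + 1) * PowerSeries.C (R := ℂ) ((t + 1).factorial : ℂ)
              * PowerSeries.C (R := ℂ) ((((k + t).choose (k - 1)) ^ 2 : ℕ) : ℂ)
              * (1 + PowerSeries.C (R := ℂ) ((k + t + 2 : ℕ) : ℂ) * PowerSeries.X)
            + (PowerSeries.C (R := ℂ) ((t + 1).factorial : ℂ)
                * PowerSeries.C (R := ℂ) ((((k + t + 1).choose k) ^ 2 : ℕ) : ℂ)
              - PowerSeries.C (R := ℂ) ((t + 1).factorial : ℂ)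
                * PowerSeries.C (R := ℂ) ((((k + t).choose (k - 1)) ^ 2 : ℕ) : ℂ))
              * PowerSeries.X ^ (t + 1)
              * (1 + PowerSeries.C (R := ℂ) ((k + t + 2 : ℕ) : ℂ) * PowerSeries.X)) * hA
    have hsum : g * (∑ s ∈ Finset.range (N + 1), trm (k + 1) s)
        = (∑ s ∈ Finset.range (N + 1), trm k s) - Wf k (N + 1) := by
      rw [Finset.mul_sum]
      rw [Finset.sum_congr rfl (fun s _ => hterm s)]
      rw [Finset.sum_add_distrib]
      rw [Finset.sum_range_sub' (Wf k) (N + 1)]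
      have hW0 : Wf k 0 = 0 := rfl
      rw [hW0, zero_sub]
      ring
    have hS : (∑ s ∈ Finset.range (N + 1), trm (k + 1) s)
        = g⁻¹ * ((∑ s ∈ Finset.range (N + 1), trm k s) - Wf k (N + 1)) := by
      rw [← hsum, ← mul_assoc, mul_comm g⁻¹ g, hg, one_mul]
    have hQsucc : Qq (k + 1) = Qq k * g := by
      obtain ⟨m, rfl⟩ : ∃ m, k = m + 1 := ⟨k - 1, by omega⟩
      unfold Qq
      have e : m + 1 + 1 - 1 = m + 1 := by omega
      have e2 : m + 1 - 1 = m := by omega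
      rw [e, e2, Finset.prod_range_succ]
    have hQinv : (Qq (k + 1))⁻¹ = g⁻¹ * (Qq k)⁻¹ := by
      symm
      rw [PowerSeries.eq_inv_iff_mul_eq_one (by rw [constCoeff_Qq]; exact one_ne_zero)]
      rw [hQsucc]
      have : (g⁻¹ * (Qq k)⁻¹) * (Qq k * g) = (Qq k * (Qq k)⁻¹) * (g * g⁻¹) := by ring
      rw [this, Qq_mul_inv, hg, one_mul]
    rw [hS, hQinv]
    refine coeff_mul_congr g⁻¹ N ?_ N le_rfl
    intro j hj
    rw [map_sub]
    have hWz : PowerSeries.coeff (R := ℂ) j (Wf k (N + 1)) = 0 := by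
      have he : Wf k (N + 1) = PowerSeries.X ^ (N + 1) *
          (PowerSeries.C (R := ℂ) ((((N + 2 * k + 1) * (N.factorial * ((k + N).choose k) ^ 2)) : ℕ) : ℂ)
            * (Pp (k + 1 + N))⁻¹) := by
        show PowerSeries.C (R := ℂ) ((((N + 2 * k + 1) * (N.factorial * ((k + N).choose k) ^ 2)) : ℕ) : ℂ)
            * (PowerSeries.X ^ (N + 1) * (Pp (k + 1 + N))⁻¹) = _
        ring
      rw [he]
      exact coeff_X_pow_mul_eq_zero (by omega) _
    rw [hWz, sub_zero, coeff_sum_stable k N j hj, IH j]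

end FRFaux

/-- For every `k ≥ 1`, the identity
`∑_{s=0}^∞ λ^s s! C(k+s-1,k-1)² / ∏_{ℓ=1}^{k+s}(1+λℓ) = 1 / ∏_{ℓ=1}^{k-1}(1-λℓ)`
holds in `ℂ[[λ]]`.  The infinite sum converges in the `λ`-adic topology: the `N`-th
coefficient only receives contributions from the terms with `s ≤ N` (the `s`-th term is
divisible by `λ^s`), so the identity is stated coefficientwise via the stabilized
partial sums. -/
theorem falling_rising_factorial_identity (k : ℕ) (hk : 1 ≤ k) :
    ∀ N : ℕ,
      (PowerSeries.coeff (R := ℂ) N)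
        (∑ s ∈ Finset.range (N + 1),
          PowerSeries.X ^ s * PowerSeries.C (R := ℂ) (s.factorial : ℂ)
            * PowerSeries.C (R := ℂ) ((((k + s - 1).choose (k - 1)) ^ 2 : ℕ) : ℂ)
            * (∏ ℓ ∈ Finset.range (k + s),
                (1 + PowerSeries.C (R := ℂ) ((ℓ + 1 : ℕ) : ℂ) * PowerSeries.X))⁻¹)
      =
      (PowerSeries.coeff (R := ℂ) N)
        (∏ ℓ ∈ Finset.range (k - 1),
          (1 - PowerSeries.C (R := ℂ) ((ℓ + 1 : ℕ) : ℂ) * PowerSeries.X))⁻¹ := by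
  intro N
  have h := main k hk N
  simpa only [trm, Pp, Qq] using h
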